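/- Let V = ℝ² and identify g² with a space of V-valued symmetric bilinear forms on V via (X^i_{jk}) ↦ B where B(v, w)^i = Σ_{j,k} X^i_{jk} v^j w^k. The linear map sending f ∈ Hom(V, g²) to the alternating bilinear map (v, w) ↦ f(w)(v, ·) − f(v)(w, ·), with values in Hom(V, V), is a linear isomorphism from Hom(V, g²) onto the space of alternating bilinear maps V × V → Hom(V, V). (This is the exactness of the Spencer complex 0 = (g²)⁽¹⁾ → g² ⊗ V* → (V ⊗ V*) ⊗ Λ²V* → 0.) -/
import Mathlib


/- STATEMENT 9: exactness of the Spencer complex 0 = (g²)⁽¹⁾ → g² ⊗ V* → (V ⊗ V*) ⊗ Λ²V* → 0: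
   the map sending f ∈ Hom(V, g²) to the alternating bilinear Hom(V,V)-valued map
   (v, w) ↦ f(w)(v, ·) − f(v)(w, ·) is a linear isomorphism onto the space of alternating
   bilinear maps V × V → Hom(V, V). -/

/-- The space g² of arrays (X^i_{jk}), symmetric in the lower indices, satisfying
X²₁₁ = 0, X¹₁₁ − 2X²₁₂ = 0, 2X¹₁₂ − X²₂₂ = 0, X¹₂₂ = 0.
(Index value `0` stands for `1`, index value `1` stands for `2`.) -/
def g2 : Submodule ℝ (Fin 2 → Fin 2 → Fin 2 → ℝ) where
  carrier := {X | (∀ i j k, X i j k = X i k j) ∧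
    X 1 0 0 = 0 ∧ X 0 0 0 - 2 * X 1 0 1 = 0 ∧ 2 * X 0 0 1 - X 1 1 1 = 0 ∧ X 0 1 1 = 0}
  add_mem' := by
    rintro X Y ⟨hs, h1, h2, h3, h4⟩ ⟨hs', h1', h2', h3', h4'⟩
    refine ⟨fun i j k => ?_, ?_, ?_, ?_, ?_⟩ <;>
      simp only [Pi.add_apply] <;>
      first
        | rw [hs i j k, hs' i j k]
        | linarith
  zero_mem' := ⟨fun i j k => rfl, by norm_num, by norm_num, by norm_num, by norm_num⟩
  smul_mem' := by
    rintro c X ⟨hs, h1, h2, h3, h4⟩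
    refine ⟨fun i j k => ?_, ?_, ?_, ?_, ?_⟩ <;>
      simp only [Pi.smul_apply, smul_eq_mul] <;>
      first
        | rw [hs i j k]
        | linear_combination c * h1
        | linear_combination c * h2
        | linear_combination c * h3
        | linear_combination c * h4

/-- The V-valued bilinear form associated to an array: B(v,w)^i = Σ_{j,k} X^i_{jk} v^j w^k. -/
def B (X : Fin 2 → Fin 2 → Fin 2 → ℝ) (v w : Fin 2 → ℝ) : Fin 2 → ℝ :=
  fun i => ∑ j, ∑ k, X i j k * v j * w k

/-- The Spencer operator: f ↦ ((v, w) ↦ f(w)(v, ·) − f(v)(w, ·)), the value on a vector u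
being B(f w)(v, u) − B(f v)(w, u). -/
def D (f : (Fin 2 → ℝ) →ₗ[ℝ] g2) (v w u : Fin 2 → ℝ) : Fin 2 → ℝ :=
  B (f w).1 v u - B (f v).1 w u


/-- Auxiliary: the first standard basis vector. -/
def ee0 : Fin 2 → ℝ := ![1, 0]
/-- Auxiliary: the second standard basis vector. -/
def ee1 : Fin 2 → ℝ := ![0, 1]

lemma vec_decomp (v : Fin 2 → ℝ) : v = v 0 • ee0 + v 1 • ee1 := by
  funext i; fin_cases i <;> simp [ee0, ee1]

lemma mem_g2 (X : Fin 2 → Fin 2 → Fin 2 → ℝ) : X ∈ g2 ↔ ((∀ i j k, X i j k = X i k j) ∧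
    X 1 0 0 = 0 ∧ X 0 0 0 - 2 * X 1 0 1 = 0 ∧ 2 * X 0 0 1 - X 1 1 1 = 0 ∧ X 0 1 1 = 0) :=
  Iff.rfl

/-- Auxiliary: the general element of g² with parameters a = X¹₁₂, c = X²₁₂. -/
def arr (a c : ℝ) : Fin 2 → Fin 2 → Fin 2 → ℝ := ![![![2*c, a], ![a, 0]], ![![0, c], ![c, 2*a]]]

lemma arr_mem (a c : ℝ) : arr a c ∈ g2 := by
  rw [mem_g2]
  refine ⟨fun i j k => ?_, ?_, ?_, ?_, ?_⟩
  · fin_cases i <;> fin_cases j <;> fin_cases k <;> norm_num [arr]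
  all_goals norm_num [arr]

lemma ee00 : ee0 0 = 1 := rfl
lemma ee01 : ee0 1 = 0 := rfl
lemma ee10 : ee1 0 = 0 := rfl
lemma ee11 : ee1 1 = 1 := rfl

lemma stmt9_add : ∀ f g : (Fin 2 → ℝ) →ₗ[ℝ] g2, D (f + g) = fun v w u => D f v w u + D g v w u := by
  intro f g
  funext v w u i
  simp only [D, B, LinearMap.add_apply, Submodule.coe_add, Pi.add_apply, Pi.sub_apply,
    Fin.sum_univ_two]
  ring
lemma stmt9_smul : ∀ (c : ℝ) (f : (Fin 2 → ℝ) →ₗ[ℝ] g2), D (c • f) = fun v w u => c • D f v w u := by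
  intro c f
  funext v w u i
  simp only [D, B, LinearMap.smul_apply, Submodule.coe_smul, Pi.smul_apply, Pi.sub_apply,
    Fin.sum_univ_two, smul_eq_mul]
  ring
lemma stmt9_inj : Function.Injective D := by
  intro f g h
  obtain ⟨hsA, hA1, hA2, hA3, hA4⟩ := (mem_g2 _).1 (f ee0).2
  obtain ⟨hsC, hC1, hC2, hC3, hC4⟩ := (mem_g2 _).1 (f ee1).2
  obtain ⟨hsA', hA1', hA2', hA3', hA4'⟩ := (mem_g2 _).1 (g ee0).2
  obtain ⟨hsC', hC1', hC2', hC3', hC4'⟩ := (mem_g2 _).1 (g ee1).2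
  have E : ∀ (u : Fin 2 → ℝ) (i : Fin 2), D f ee0 ee1 u i = D g ee0 ee1 u i :=
    fun u i => congrFun (congrFun (congrFun (congrFun h ee0) ee1) u) i
  have E00 := E ee0 0
  have E01 := E ee0 1
  have E10 := E ee1 0
  have E11 := E ee1 1
  simp only [D, B, Pi.sub_apply, Fin.sum_univ_two, ee00, ee01, ee10, ee11,
    mul_one, mul_zero, zero_mul, add_zero, zero_add] at E00 E01 E10 E11
  have key0 : ∀ i j k : Fin 2, ((f ee0 : g2) : Fin 2 → Fin 2 → Fin 2 → ℝ) i j k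
      = ((g ee0 : g2) : Fin 2 → Fin 2 → Fin 2 → ℝ) i j k := by
    simp only [Fin.forall_fin_two]
    refine ⟨⟨⟨?_, ?_⟩, ?_, ?_⟩, ⟨?_, ?_⟩, ?_, ?_⟩ <;>
      linarith [hsA 0 0 1, hsA 1 0 1, hsA' 0 0 1, hsA' 1 0 1, hsC 0 0 1, hsC 1 0 1,
        hsC' 0 0 1, hsC' 1 0 1]
  have key1 : ∀ i j k : Fin 2, ((f ee1 : g2) : Fin 2 → Fin 2 → Fin 2 → ℝ) i j k
      = ((g ee1 : g2) : Fin 2 → Fin 2 → Fin 2 → ℝ) i j k := by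
    simp only [Fin.forall_fin_two]
    refine ⟨⟨⟨?_, ?_⟩, ?_, ?_⟩, ⟨?_, ?_⟩, ?_, ?_⟩ <;>
      linarith [hsA 0 0 1, hsA 1 0 1, hsA' 0 0 1, hsA' 1 0 1, hsC 0 0 1, hsC 1 0 1,
        hsC' 0 0 1, hsC' 1 0 1]
  have h0 : f ee0 = g ee0 :=
    Subtype.ext (funext fun i => funext fun j => funext fun k => key0 i j k)
  have h1 : f ee1 = g ee1 :=
    Subtype.ext (funext fun i => funext fun j => funext fun k => key1 i j k)
  apply LinearMap.ext; intro v
  rw [vec_decomp v, map_add, map_add, map_smul, map_smul, map_smul, map_smul, h0, h1]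
lemma stmt9_surj : ∀ b : (Fin 2 → ℝ) →ₗ[ℝ] (Fin 2 → ℝ) →ₗ[ℝ] (Fin 2 → ℝ) →ₗ[ℝ] (Fin 2 → ℝ),
    (∀ v, b v v = 0) →
      ∃ f : (Fin 2 → ℝ) →ₗ[ℝ] g2, ∀ v w u, D f v w u = b v w u := by
  intro b hb
  have hskew : b ee1 ee0 = -(b ee0 ee1) := by
    have h2 := hb (ee0 + ee1)
    simp only [map_add, LinearMap.add_apply, hb, zero_add, add_zero] at h2
    exact eq_neg_of_add_eq_zero_left h2
  have hbexp : ∀ v w u i, b v w u i = (v 0 * w 1 - v 1 * w 0) *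
      (u 0 * b ee0 ee1 ee0 i + u 1 * b ee0 ee1 ee1 i) := by
    intro v w u i
    conv_lhs => rw [vec_decomp v, vec_decomp w, vec_decomp u]
    simp only [map_add, map_smul, LinearMap.add_apply, LinearMap.smul_apply, hb, hskew,
      LinearMap.neg_apply, Pi.add_apply, Pi.smul_apply, Pi.neg_apply, Pi.zero_apply,
      LinearMap.zero_apply, smul_eq_mul]
    ring
  set p := b ee0 ee1 ee0 0 with hp
  set q := b ee0 ee1 ee1 0 with hq
  set r := b ee0 ee1 ee0 1 with hr
  set s := b ee0 ee1 ee1 1 with hs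
  refine ⟨⟨⟨fun v => v 0 • (⟨arr ((p - 2*s)/3) (-r), arr_mem _ _⟩ : g2)
      + v 1 • (⟨arr q ((2*p - s)/3), arr_mem _ _⟩ : g2), ?_⟩, ?_⟩, ?_⟩
  · intro x y
    simp only [Pi.add_apply]
    rw [add_smul, add_smul]
    abel
  · intro c x
    simp only [Pi.smul_apply, smul_eq_mul, RingHom.id_apply]
    rw [mul_smul, mul_smul, smul_add]
  · intro v w u
    funext i
    rw [hbexp]
    show (B (w 0 • arr ((p - 2*s)/3) (-r) + w 1 • arr q ((2*p - s)/3)) v u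
        - B (v 0 • arr ((p - 2*s)/3) (-r) + v 1 • arr q ((2*p - s)/3)) w u) i = _
    fin_cases i <;>
      simp only [B, Pi.sub_apply, Pi.add_apply, Pi.smul_apply, smul_eq_mul,
        Fin.sum_univ_two, arr, Matrix.cons_val_zero, Matrix.cons_val_one, Matrix.head_cons,
        Fin.isValue, Fin.zero_eta, Fin.mk_one] <;>
      ring


/-- The Spencer operator is linear, injective, and surjective onto the space of
alternating bilinear maps V × V → Hom(V, V) (the latter represented by trilinear maps
alternating in the first two arguments). -/
theorem stmt9 :
    (∀ f g : (Fin 2 → ℝ) →ₗ[ℝ] g2, D (f + g) = fun v w u => D f v w u + D g v w u) ∧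
    (∀ (c : ℝ) (f : (Fin 2 → ℝ) →ₗ[ℝ] g2), D (c • f) = fun v w u => c • D f v w u) ∧
    Function.Injective D ∧
    (∀ b : (Fin 2 → ℝ) →ₗ[ℝ] (Fin 2 → ℝ) →ₗ[ℝ] (Fin 2 → ℝ) →ₗ[ℝ] (Fin 2 → ℝ),
      (∀ v, b v v = 0) →
        ∃ f : (Fin 2 → ℝ) →ₗ[ℝ] g2, ∀ v w u, D f v w u = b v w u) :=
  ⟨stmt9_add, stmt9_smul, stmt9_inj, stmt9_surj⟩
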